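/- Let d ≥ 1 and δ' ≥ 3 be integers with δ' odd. Then the continued fraction expansion of √(2d(2δ'²d − 1)) is [2dδ'−1; overline{1, 2δ'−2, 1, 2(2dδ'−1)}], and the fundamental solution of u² − 2d(2δ'²d−1)v² = 1 is (4δ'²d − 1, 2δ'). -/

import Mathlib

set_option maxHeartbeats 2000000 in
/-- Let `d ≥ 1` and `δ' ≥ 3` be integers with `δ'` odd. Then the continued fraction expansion
of `√(2d(2δ'²d − 1))` is `[2dδ'−1; 1, 2δ'−2, 1, 2(2dδ'−1), …]` (periodic with period
`(1, 2δ'−2, 1, 2(2dδ'−1))`), and the fundamental solution of `u² − 2d(2δ'²d−1)v² = 1` is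
`(4δ'²d − 1, 2δ')`. -/
theorem stmt18 (d δ' : ℤ) (hd : 1 ≤ d) (hδ' : 3 ≤ δ') (hodd : Odd δ') :
    ((GenContFract.of (Real.sqrt (2 * d * (2 * δ' ^ 2 * d - 1)))).h
        = 2 * (d : ℝ) * (δ' : ℝ) - 1 ∧
      ∀ n : ℕ,
        (GenContFract.of (Real.sqrt (2 * d * (2 * δ' ^ 2 * d - 1)))).partDens.get? (4 * n)
          = some (1 : ℝ) ∧
        (GenContFract.of (Real.sqrt (2 * d * (2 * δ' ^ 2 * d - 1)))).partDens.get? (4 * n + 1)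
          = some (2 * (δ' : ℝ) - 2) ∧
        (GenContFract.of (Real.sqrt (2 * d * (2 * δ' ^ 2 * d - 1)))).partDens.get? (4 * n + 2)
          = some (1 : ℝ) ∧
        (GenContFract.of (Real.sqrt (2 * d * (2 * δ' ^ 2 * d - 1)))).partDens.get? (4 * n + 3)
          = some (2 * (2 * (d : ℝ) * (δ' : ℝ) - 1))) ∧
    Pell.IsFundamental
      (Pell.Solution₁.mk (4 * δ' ^ 2 * d - 1) (2 * δ') (by ring) :
        Pell.Solution₁ (2 * d * (2 * δ' ^ 2 * d - 1))) := by
  refine ⟨?_, ?_⟩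
  · have hD : (1:ℝ) ≤ (d:ℝ) := by exact_mod_cast hd
    have hE : (3:ℝ) ≤ (δ':ℝ) := by exact_mod_cast hδ'
    set s := Real.sqrt (2 * (d:ℝ) * (2 * (δ':ℝ) ^ 2 * (d:ℝ) - 1)) with hsdef
    have h9 : (9:ℝ) ≤ (δ':ℝ) ^ 2 := by nlinarith
    have h9d : (9:ℝ) ≤ (δ':ℝ) ^ 2 * (d:ℝ) := by nlinarith
    have hN0 : (0:ℝ) ≤ 2 * (d:ℝ) * (2 * (δ':ℝ) ^ 2 * (d:ℝ) - 1) := by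
      have : (0:ℝ) ≤ (2 * (δ':ℝ) ^ 2 * (d:ℝ) - 1) * ((d:ℝ) - 0) := by nlinarith
      nlinarith
    have hs2 : s ^ 2 = 2 * (d:ℝ) * (2 * (δ':ℝ) ^ 2 * (d:ℝ) - 1) := Real.sq_sqrt hN0
    have hs0 : (0:ℝ) ≤ s := Real.sqrt_nonneg _
    have hslb : 2 * (d:ℝ) * (δ':ℝ) - 1 < s := by
      rw [hsdef]
      refine (Real.lt_sqrt (by nlinarith)).mpr ?_
      nlinarith
    have hsub : s < 2 * (d:ℝ) * (δ':ℝ) := by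
      rw [hsdef]
      refine (Real.sqrt_lt' (by nlinarith)).mpr ?_
      nlinarith
    have hm : (0:ℝ) < 4 * (d:ℝ) * (δ':ℝ) - 2 * (d:ℝ) - 1 := by nlinarith
    have hd0 : (0:ℝ) < (d:ℝ) := by linarith
    -- floors
    have hfl0 : ⌊s⌋ = 2 * d * δ' - 1 := by
      rw [Int.floor_eq_iff]; constructor
      · push_cast; linarith
      · push_cast; linarith
    have hfl1 : ⌊(s + (2 * (d:ℝ) * (δ':ℝ) - 1)) / (4 * (d:ℝ) * (δ':ℝ) - 2 * (d:ℝ) - 1)⌋ = 1 := by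
      rw [Int.floor_eq_iff]; push_cast
      rw [le_div_iff₀ hm, div_lt_iff₀ hm]
      constructor <;> nlinarith
    have hfl2 : ⌊(s + (2 * (d:ℝ) * (δ':ℝ) - 2 * (d:ℝ))) / (2 * (d:ℝ))⌋ = 2 * δ' - 2 := by
      rw [Int.floor_eq_iff]; push_cast
      rw [le_div_iff₀ (by linarith : (0:ℝ) < 2 * (d:ℝ)), div_lt_iff₀ (by linarith : (0:ℝ) < 2 * (d:ℝ))]
      constructor <;> nlinarith
    have hfl3 : ⌊(s + (2 * (d:ℝ) * (δ':ℝ) - 2 * (d:ℝ))) / (4 * (d:ℝ) * (δ':ℝ) - 2 * (d:ℝ) - 1)⌋ = 1 := by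
      rw [Int.floor_eq_iff]; push_cast
      rw [le_div_iff₀ hm, div_lt_iff₀ hm]
      constructor <;> nlinarith
    have hfl4 : ⌊s + (2 * (d:ℝ) * (δ':ℝ) - 1)⌋ = 2 * (2 * d * δ' - 1) := by
      rw [Int.floor_eq_iff]; constructor
      · push_cast; linarith
      · push_cast; linarith
    -- fracts and inverses
    have hfr0 : Int.fract s = s - (2 * (d:ℝ) * (δ':ℝ) - 1) := by
      rw [← Int.self_sub_floor, hfl0]; push_cast; ring
    have hfr0pos : 0 < Int.fract s := by rw [hfr0]; linarith
    have hX1 : (Int.fract s)⁻¹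
        = (s + (2 * (d:ℝ) * (δ':ℝ) - 1)) / (4 * (d:ℝ) * (δ':ℝ) - 2 * (d:ℝ) - 1) := by
      rw [hfr0, eq_div_iff hm.ne', inv_mul_eq_div,
        div_eq_iff (by linarith : s - (2 * (d:ℝ) * (δ':ℝ) - 1) ≠ 0)]
      linear_combination -hs2
    have hfr1 : Int.fract ((s + (2 * (d:ℝ) * (δ':ℝ) - 1)) / (4 * (d:ℝ) * (δ':ℝ) - 2 * (d:ℝ) - 1))
        = (s - (2 * (d:ℝ) * (δ':ℝ) - 2 * (d:ℝ))) / (4 * (d:ℝ) * (δ':ℝ) - 2 * (d:ℝ) - 1) := by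
      rw [← Int.self_sub_floor, hfl1]; push_cast; rw [div_sub_one hm.ne']; congr 1; ring
    have hfr1pos : 0 < Int.fract ((s + (2 * (d:ℝ) * (δ':ℝ) - 1)) / (4 * (d:ℝ) * (δ':ℝ) - 2 * (d:ℝ) - 1)) := by
      rw [hfr1]; apply div_pos _ hm; nlinarith
    have hX2 : (Int.fract ((s + (2 * (d:ℝ) * (δ':ℝ) - 1)) / (4 * (d:ℝ) * (δ':ℝ) - 2 * (d:ℝ) - 1)))⁻¹
        = (s + (2 * (d:ℝ) * (δ':ℝ) - 2 * (d:ℝ))) / (2 * (d:ℝ)) := by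
      rw [hfr1, inv_div, div_eq_div_iff (ne_of_gt (by linarith : (0:ℝ) < s - (2 * (d:ℝ) * (δ':ℝ) - 2 * (d:ℝ)))) (ne_of_gt (by linarith : (0:ℝ) < 2 * (d:ℝ)))]
      linear_combination -hs2
    have hfr2 : Int.fract ((s + (2 * (d:ℝ) * (δ':ℝ) - 2 * (d:ℝ))) / (2 * (d:ℝ)))
        = (s - (2 * (d:ℝ) * (δ':ℝ) - 2 * (d:ℝ))) / (2 * (d:ℝ)) := by
      rw [← Int.self_sub_floor, hfl2]; push_cast; field_simp; ring
    have hfr2pos : 0 < Int.fract ((s + (2 * (d:ℝ) * (δ':ℝ) - 2 * (d:ℝ))) / (2 * (d:ℝ))) := by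
      rw [hfr2]; apply div_pos _ (by linarith : (0:ℝ) < 2 * (d:ℝ)); nlinarith
    have hX3 : (Int.fract ((s + (2 * (d:ℝ) * (δ':ℝ) - 2 * (d:ℝ))) / (2 * (d:ℝ))))⁻¹
        = (s + (2 * (d:ℝ) * (δ':ℝ) - 2 * (d:ℝ))) / (4 * (d:ℝ) * (δ':ℝ) - 2 * (d:ℝ) - 1) := by
      rw [hfr2, inv_div, div_eq_div_iff (ne_of_gt (by linarith : (0:ℝ) < s - (2 * (d:ℝ) * (δ':ℝ) - 2 * (d:ℝ)))) hm.ne']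
      linear_combination -hs2
    have hfr3 : Int.fract ((s + (2 * (d:ℝ) * (δ':ℝ) - 2 * (d:ℝ))) / (4 * (d:ℝ) * (δ':ℝ) - 2 * (d:ℝ) - 1))
        = (s - (2 * (d:ℝ) * (δ':ℝ) - 1)) / (4 * (d:ℝ) * (δ':ℝ) - 2 * (d:ℝ) - 1) := by
      rw [← Int.self_sub_floor, hfl3]; push_cast; rw [div_sub_one hm.ne']; congr 1; ring
    have hfr3pos : 0 < Int.fract ((s + (2 * (d:ℝ) * (δ':ℝ) - 2 * (d:ℝ))) / (4 * (d:ℝ) * (δ':ℝ) - 2 * (d:ℝ) - 1)) := by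
      rw [hfr3]; apply div_pos _ hm; linarith
    have hX4 : (Int.fract ((s + (2 * (d:ℝ) * (δ':ℝ) - 2 * (d:ℝ))) / (4 * (d:ℝ) * (δ':ℝ) - 2 * (d:ℝ) - 1)))⁻¹
        = s + (2 * (d:ℝ) * (δ':ℝ) - 1) := by
      rw [hfr3, inv_div, div_eq_iff (by linarith : s - (2 * (d:ℝ) * (δ':ℝ) - 1) ≠ 0)]
      linear_combination -hs2
    have hfr4 : Int.fract (s + (2 * (d:ℝ) * (δ':ℝ) - 1)) = s - (2 * (d:ℝ) * (δ':ℝ) - 1) := by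
      rw [← Int.self_sub_floor, hfl4]; push_cast; ring
    have hfr4pos : 0 < Int.fract (s + (2 * (d:ℝ) * (δ':ℝ) - 1)) := by rw [hfr4]; linarith
    have hX5 : (Int.fract (s + (2 * (d:ℝ) * (δ':ℝ) - 1)))⁻¹
        = (s + (2 * (d:ℝ) * (δ':ℝ) - 1)) / (4 * (d:ℝ) * (δ':ℝ) - 2 * (d:ℝ) - 1) := by
      rw [hfr4, eq_div_iff hm.ne', inv_mul_eq_div,
        div_eq_iff (by linarith : s - (2 * (d:ℝ) * (δ':ℝ) - 1) ≠ 0)]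
      linear_combination -hs2
    clear hN0
    set E1 := (s + (2 * (d:ℝ) * (δ':ℝ) - 1)) / (4 * (d:ℝ) * (δ':ℝ) - 2 * (d:ℝ) - 1) with hE1
    set E3 := (s + (2 * (d:ℝ) * (δ':ℝ) - 2 * (d:ℝ))) / (4 * (d:ℝ) * (δ':ℝ) - 2 * (d:ℝ) - 1) with hE3
    set E2 := (s + (2 * (d:ℝ) * (δ':ℝ) - 2 * (d:ℝ))) / (2 * (d:ℝ)) with hE2
    set E4 := s + (2 * (d:ℝ) * (δ':ℝ) - 1) with hE4
    have step0 : ∀ n : ℕ, (GenContFract.of s).s.get? (n + 1) = (GenContFract.of E1).s.get? n :=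
      fun n => by rw [GenContFract.of_s_succ, hX1]
    have step1 : ∀ n : ℕ, (GenContFract.of E1).s.get? (n + 1) = (GenContFract.of E2).s.get? n :=
      fun n => by rw [GenContFract.of_s_succ, hX2]
    have step2 : ∀ n : ℕ, (GenContFract.of E2).s.get? (n + 1) = (GenContFract.of E3).s.get? n :=
      fun n => by rw [GenContFract.of_s_succ, hX3]
    have step3 : ∀ n : ℕ, (GenContFract.of E3).s.get? (n + 1) = (GenContFract.of E4).s.get? n :=
      fun n => by rw [GenContFract.of_s_succ, hX4]
    have step4 : ∀ n : ℕ, (GenContFract.of E4).s.get? (n + 1) = (GenContFract.of E1).s.get? n :=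
      fun n => by rw [GenContFract.of_s_succ, hX5]
    have head0 : (GenContFract.of s).s.get? 0 = some ⟨1, (1:ℝ)⟩ := by
      have h := GenContFract.of_s_head hfr0pos.ne'
      rw [hX1, hfl1] at h
      rw [show ((1:ℤ):ℝ) = 1 by norm_num] at h
      exact h
    have head1 : (GenContFract.of E1).s.get? 0 = some ⟨1, 2 * (δ':ℝ) - 2⟩ := by
      have h := GenContFract.of_s_head hfr1pos.ne'
      rw [hX2, hfl2] at h
      rw [show ((2 * δ' - 2 : ℤ):ℝ) = 2 * (δ':ℝ) - 2 by push_cast; ring] at h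
      exact h
    have head2 : (GenContFract.of E2).s.get? 0 = some ⟨1, (1:ℝ)⟩ := by
      have h := GenContFract.of_s_head hfr2pos.ne'
      rw [hX3, hfl3] at h
      rw [show ((1:ℤ):ℝ) = 1 by norm_num] at h
      exact h
    have head3 : (GenContFract.of E3).s.get? 0 = some ⟨1, 2 * (2 * (d:ℝ) * (δ':ℝ) - 1)⟩ := by
      have h := GenContFract.of_s_head hfr3pos.ne'
      rw [hX4, hfl4] at h
      rw [show ((2 * (2 * d * δ' - 1) : ℤ):ℝ) = 2 * (2 * (d:ℝ) * (δ':ℝ) - 1) by push_cast; ring] at h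
      exact h
    have head4 : (GenContFract.of E4).s.get? 0 = some ⟨1, (1:ℝ)⟩ := by
      have h := GenContFract.of_s_head hfr4pos.ne'
      rw [hX5, hfl1] at h
      rw [show ((1:ℤ):ℝ) = 1 by norm_num] at h
      exact h
    have g1 : (GenContFract.of E1).s.get? 1 = some ⟨1, (1:ℝ)⟩ := by
      rw [show (1:ℕ) = 0 + 1 from rfl, step1]; exact head2
    have g2 : (GenContFract.of E1).s.get? 2 = some ⟨1, 2 * (2 * (d:ℝ) * (δ':ℝ) - 1)⟩ := by
      rw [show (2:ℕ) = 1 + 1 from rfl, step1]; exact (step2 0).trans head3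
    have g3 : (GenContFract.of E1).s.get? 3 = some ⟨1, (1:ℝ)⟩ := by
      rw [show (3:ℕ) = 2 + 1 from rfl, step1, show (2:ℕ) = 1 + 1 from rfl, step2,
        show (1:ℕ) = 0 + 1 from rfl, step3]; exact head4
    have per : ∀ n : ℕ, (GenContFract.of E1).s.get? (n + 4) = (GenContFract.of E1).s.get? n := by
      intro n
      rw [show n + 4 = (n + 3) + 1 from rfl, step1, show n + 3 = (n + 2) + 1 from rfl, step2,
        show n + 2 = (n + 1) + 1 from rfl, step3, step4]
    have perN : ∀ (n k : ℕ), (GenContFract.of E1).s.get? (4 * n + k) = (GenContFract.of E1).s.get? k := by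
      intro n
      induction n with
      | zero => intro k; norm_num
      | succ n ih =>
        intro k
        rw [show 4 * (n + 1) + k = (4 * n + k) + 4 by ring, per, ih]
    have pd : ∀ n : ℕ, (GenContFract.of s).partDens.get? n
        = ((GenContFract.of s).s.get? n).map GenContFract.Pair.b :=
      fun n => Stream'.Seq.map_get? GenContFract.Pair.b (GenContFract.of s).s n
    refine ⟨?_, ?_⟩
    · rw [GenContFract.of_h_eq_floor, hfl0]; push_cast; ring
    · intro n
      refine ⟨?_, ?_, ?_, ?_⟩
      · rcases n with _ | n
        · rw [pd, show 4 * 0 = 0 by norm_num, head0]; rfl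
        · rw [pd, show 4 * (n + 1) = (4 * n + 3) + 1 by ring, step0, perN n 3, g3]; rfl
      · have pN := perN n 0
        rw [Nat.add_zero] at pN
        rw [pd, show 4 * n + 1 = (4 * n) + 1 from rfl, step0, pN, head1]; rfl
      · rw [pd, show 4 * n + 2 = (4 * n + 1) + 1 from rfl, step0, perN n 1, g1]; rfl
      · rw [pd, show 4 * n + 3 = (4 * n + 2) + 1 from rfl, step0, perN n 2, g2]; rfl
  · refine ⟨?_, ?_, ?_⟩
    · rw [Pell.Solution₁.x_mk]; nlinarith
    · rw [Pell.Solution₁.y_mk]; linarith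
    · intro b hb
      rw [Pell.Solution₁.x_mk]
      have hprop := b.prop
      have hx0 : 0 < b.x := by linarith
      have hy0 : b.y ≠ 0 := by
        intro h; rw [h] at hprop; nlinarith
      have hw1 : 1 ≤ |b.y| := Int.one_le_abs hy0
      have hw2 : b.y ^ 2 = |b.y| ^ 2 := (sq_abs b.y).symm
      have hDy : 2 * δ' ≤ |b.y| := by
        by_contra hcon
        push_neg at hcon
        have hw3 : |b.y| ≤ 2 * δ' - 1 := by omega
        have hprop' : b.x ^ 2 = 2 * d * (2 * δ' ^ 2 * d - 1) * |b.y| ^ 2 + 1 := by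
          rw [← hw2]; linarith
        have hcw : 0 < 2 * d * δ' * |b.y| := by positivity
        have k1 : (2 * d * δ' * |b.y| - 1) ^ 2 < b.x ^ 2 := by nlinarith
        have k2 : b.x ^ 2 < (2 * d * δ' * |b.y|) ^ 2 := by nlinarith
        have l1 : b.x < 2 * d * δ' * |b.y| := by nlinarith
        have l2 : 2 * d * δ' * |b.y| - 1 < b.x := by nlinarith
        linarith
      have hsq : (2 * δ') ^ 2 ≤ |b.y| ^ 2 := by
        have : 0 ≤ 2 * δ' := by linarith
        exact pow_le_pow_left₀ this hDy 2
      have hfin : (4 * δ' ^ 2 * d - 1) ^ 2 ≤ b.x ^ 2 := by nlinarith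
      nlinarith
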